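/- Let P_ζ ∈ B(F_m) denote the orthogonal projection onto ℂζ. Then ⋂_{n∈ℕ} W*({a_j : j ∈ ℤ, |j| > n}) = ℂP_ζ + ℂP_ζ^⊥, where W*(S) denotes the von Neumann algebra generated by S in B(F_m). In other words, the tail algebra of the monotone stochastic process associated with the vacuum state ω = ⟨·ζ, ζ⟩ equals ℂP_ζ ⊕ ℂP_ζ^⊥ ≅ ℂ ⊕ ℂ. -/

import Mathlib

open scoped InnerProductSpace

set_option linter.unusedSectionVars false
set_option maxHeartbeats 1000000




noncomputable section

variable {H : Type*} [NormedAddCommGroup H] [InnerProductSpace ℂ H] [CompleteSpace H]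

def IsLeast' (i : ℤ) (A : Finset ℤ) : Prop := i ∈ A ∧ ∀ x ∈ A, i ≤ x

def LtAll (i : ℤ) (A : Finset ℤ) : Prop := ∀ x ∈ A, i < x

def MonotoneAnnOps (e : Finset ℤ → H) (a : ℤ → H →L[ℂ] H) : Prop :=
  Orthonormal ℂ e ∧ (Submodule.span ℂ (Set.range e)).topologicalClosure = ⊤ ∧
  (∀ i A, (IsLeast' i A → a i (e A) = e (A.erase i)) ∧ (¬ IsLeast' i A → a i (e A) = 0)) ∧
  (∀ i A, (LtAll i A → star (a i) (e A) = e (insert i A)) ∧ (¬ LtAll i A → star (a i) (e A) = 0))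

/-- The von Neumann algebra `W*(S)` generated by a set `S` of bounded operators: the double
commutant of `S ∪ S*`. -/
def vNgen (S : Set (H →L[ℂ] H)) : Set (H →L[ℂ] H) :=
  Set.centralizer (Set.centralizer (S ∪ star '' S))

/-- The rank-one orthogonal projection onto `ℂ ζ`, for a unit vector `ζ`. -/
def projVac (ζ : H) : H →L[ℂ] H := (innerSL ℂ ζ).smulRight ζ



namespace SwapAux


def lowP (n : ℕ) (D : Finset ℤ) : Finset ℤ := D.filter (fun x => x < -(n : ℤ))

def hiP (n : ℕ) (D : Finset ℤ) : Finset ℤ := D.filter (fun x => ¬ x < -(n : ℤ))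

def swapFun (n : ℕ) (B B' : Finset ℤ) (D : Finset ℤ) : Finset ℤ :=
  if hiP n D = B then lowP n D ∪ B'
  else if hiP n D = B' then lowP n D ∪ B
  else D

@[simp] lemma mem_lowP {n : ℕ} {D : Finset ℤ} {x : ℤ} :
    x ∈ lowP n D ↔ x ∈ D ∧ x < -(n : ℤ) := by simp [lowP]

@[simp] lemma mem_hiP {n : ℕ} {D : Finset ℤ} {x : ℤ} :
    x ∈ hiP n D ↔ x ∈ D ∧ ¬ x < -(n : ℤ) := by simp [hiP]

lemma lowP_union_hiP (n : ℕ) (D : Finset ℤ) : lowP n D ∪ hiP n D = D :=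
  Finset.filter_union_filter_not_eq _ D

/-- A "good" pair of blocks for level `n`. -/
structure Blocks (n : ℕ) (B B' : Finset ℤ) : Prop where
  hB : B.Nonempty
  hB' : B'.Nonempty
  hBlb : ∀ x ∈ B, -(n : ℤ) ≤ x
  hBub : ∀ x ∈ B, x ≤ (n : ℤ)
  hB'lb : ∀ x ∈ B', -(n : ℤ) ≤ x
  hB'ub : ∀ x ∈ B', x ≤ (n : ℤ)
  hne : B ≠ B'

variable {n : ℕ} {B B' D : Finset ℤ}

lemma hiP_union_of (hC : ∀ x ∈ C, x < -(n : ℤ)) (hX : ∀ x ∈ X, -(n : ℤ) ≤ x) :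
    hiP n (C ∪ X) = X := by
  ext x
  simp only [mem_hiP, Finset.mem_union]
  constructor
  · rintro ⟨hx | hx, h2⟩
    · exact absurd (hC x hx) h2
    · exact hx
  · intro hx
    exact ⟨Or.inr hx, not_lt.2 (hX x hx)⟩

lemma lowP_union_of (hC : ∀ x ∈ C, x < -(n : ℤ)) (hX : ∀ x ∈ X, -(n : ℤ) ≤ x) :
    lowP n (C ∪ X) = C := by
  ext x
  simp only [mem_lowP, Finset.mem_union]
  constructor
  · rintro ⟨hx | hx, h2⟩
    · exact hx
    · exact absurd h2 (not_lt.2 (hX x hx))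
  · intro hx
    exact ⟨Or.inl hx, hC x hx⟩

lemma lowP_mem_lt (hx : x ∈ lowP n D) : x < -(n : ℤ) := (mem_lowP.1 hx).2

lemma swapFun_invol (hb : Blocks n B B') : Function.Involutive (swapFun n B B') := by
  intro D
  unfold swapFun
  by_cases h1 : hiP n D = B
  · rw [if_pos h1]
    rw [hiP_union_of (fun x hx => lowP_mem_lt hx) hb.hB'lb]
    rw [if_neg (Ne.symm hb.hne), if_pos rfl]
    rw [lowP_union_of (fun x hx => lowP_mem_lt hx) hb.hB'lb, ← h1, lowP_union_hiP]
  · rw [if_neg h1]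
    by_cases h2 : hiP n D = B'
    · rw [if_pos h2]
      rw [hiP_union_of (fun x hx => lowP_mem_lt hx) hb.hBlb]
      rw [if_pos rfl]
      rw [lowP_union_of (fun x hx => lowP_mem_lt hx) hb.hBlb, ← h2, lowP_union_hiP]
    · rw [if_neg h2, if_neg h1, if_neg h2]

section Lo

variable (hb : Blocks n B B') {j : ℤ} (hj : j < -(n : ℤ))

include hb hj

lemma mem_swapFun_lo : j ∈ swapFun n B B' D ↔ j ∈ D := by
  have hjB : j ∉ B := fun h => absurd (hb.hBlb j h) (not_le.2 hj)
  have hjB' : j ∉ B' := fun h => absurd (hb.hB'lb j h) (not_le.2 hj)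
  unfold swapFun
  split_ifs with h1 h2
  · simp only [Finset.mem_union, mem_lowP]
    constructor
    · rintro (⟨h, _⟩ | h)
      · exact h
      · exact absurd h hjB'
    · intro h; exact Or.inl ⟨h, hj⟩
  · simp only [Finset.mem_union, mem_lowP]
    constructor
    · rintro (⟨h, _⟩ | h)
      · exact h
      · exact absurd h hjB
    · intro h; exact Or.inl ⟨h, hj⟩
  · exact Iff.rfl

lemma hiP_insert_lo : hiP n (insert j D) = hiP n D := by
  ext x
  simp only [mem_hiP, Finset.mem_insert]
  constructor
  · rintro ⟨h | h, h2⟩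
    · subst h; exact absurd hj h2
    · exact ⟨h, h2⟩
  · rintro ⟨h, h2⟩; exact ⟨Or.inr h, h2⟩

lemma lowP_insert_lo : lowP n (insert j D) = insert j (lowP n D) := by
  ext x
  simp only [mem_lowP, Finset.mem_insert]
  constructor
  · rintro ⟨h | h, h2⟩
    · exact Or.inl h
    · exact Or.inr ⟨h, h2⟩
  · rintro (h | ⟨h, h2⟩)
    · subst h; exact ⟨Or.inl rfl, hj⟩
    · exact ⟨Or.inr h, h2⟩

lemma hiP_erase_lo : hiP n (D.erase j) = hiP n D := by
  ext x
  simp only [mem_hiP, Finset.mem_erase]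
  constructor
  · rintro ⟨⟨_, h⟩, h2⟩; exact ⟨h, h2⟩
  · rintro ⟨h, h2⟩
    refine ⟨⟨?_, h⟩, h2⟩
    rintro rfl; exact h2 hj
  
lemma lowP_erase_lo : lowP n (D.erase j) = (lowP n D).erase j := by
  ext x
  simp only [mem_lowP, Finset.mem_erase]
  tauto

lemma swapFun_insert_lo :
    swapFun n B B' (insert j D) = insert j (swapFun n B B' D) := by
  unfold swapFun
  rw [hiP_insert_lo hb hj, lowP_insert_lo hb hj]
  split_ifs with h1 h2
  · rw [Finset.insert_union]
  · rw [Finset.insert_union]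
  · rfl

lemma swapFun_erase_lo :
    swapFun n B B' (D.erase j) = (swapFun n B B' D).erase j := by
  have hjB : j ∉ B := fun h => absurd (hb.hBlb j h) (not_le.2 hj)
  have hjB' : j ∉ B' := fun h => absurd (hb.hB'lb j h) (not_le.2 hj)
  unfold swapFun
  rw [hiP_erase_lo hb hj, lowP_erase_lo hb hj]
  split_ifs with h1 h2
  · rw [Finset.erase_union_distrib, Finset.erase_eq_of_notMem hjB']
  · rw [Finset.erase_union_distrib, Finset.erase_eq_of_notMem hjB]
  · rfl

lemma forall_le_union_iff {X : Finset ℤ} (hX : ∀ x ∈ X, -(n : ℤ) ≤ x) :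
    (∀ x ∈ lowP n D ∪ X, j ≤ x) ↔ (∀ x ∈ D, j ≤ x) := by
  constructor
  · intro h x hx
    by_cases hlt : x < -(n : ℤ)
    · exact h x (Finset.mem_union_left _ (mem_lowP.2 ⟨hx, hlt⟩))
    · exact le_of_lt (lt_of_lt_of_le hj (not_lt.1 hlt))
  · intro h x hx
    rcases Finset.mem_union.1 hx with h' | h'
    · exact h x (mem_lowP.1 h').1
    · exact le_of_lt (lt_of_lt_of_le hj (hX x h'))

lemma forall_lt_union_iff {X : Finset ℤ} (hX : ∀ x ∈ X, -(n : ℤ) ≤ x) :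
    (∀ x ∈ lowP n D ∪ X, j < x) ↔ (∀ x ∈ D, j < x) := by
  constructor
  · intro h x hx
    by_cases hlt : x < -(n : ℤ)
    · exact h x (Finset.mem_union_left _ (mem_lowP.2 ⟨hx, hlt⟩))
    · exact lt_of_lt_of_le hj (not_lt.1 hlt)
  · intro h x hx
    rcases Finset.mem_union.1 hx with h' | h'
    · exact h x (mem_lowP.1 h').1
    · exact lt_of_lt_of_le hj (hX x h')

lemma isLeast'_swapFun_lo : IsLeast' j (swapFun n B B' D) ↔ IsLeast' j D := by
  unfold IsLeast'
  rw [mem_swapFun_lo hb hj]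
  refine and_congr_right fun hjD => ?_
  unfold swapFun
  split_ifs with h1 h2
  · exact forall_le_union_iff hb hj hb.hB'lb
  · exact forall_le_union_iff hb hj hb.hBlb
  · exact Iff.rfl

lemma ltAll_swapFun_lo : LtAll j (swapFun n B B' D) ↔ LtAll j D := by
  unfold LtAll swapFun
  split_ifs with h1 h2
  · exact forall_lt_union_iff hb hj hb.hB'lb
  · exact forall_lt_union_iff hb hj hb.hBlb
  · exact Iff.rfl

end Lo

section Hi

variable (hb : Blocks n B B') {j : ℤ} (hj : (n : ℤ) < j)

include hb hj

lemma swapFun_eq_self_of_isLeast'_hi (h : IsLeast' j D) :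
    swapFun n B B' D = D := by
  unfold swapFun
  rw [if_neg, if_neg]
  · intro hEq
    obtain ⟨b, hbB'⟩ := hb.hB'
    have hbD : b ∈ D := (mem_hiP.1 (hEq ▸ hbB')).1
    have h1 : j ≤ b := h.2 b hbD
    have h2 : b ≤ (n : ℤ) := hb.hB'ub b hbB'
    omega
  · intro hEq
    obtain ⟨b, hbB⟩ := hb.hB
    have hbD : b ∈ D := (mem_hiP.1 (hEq ▸ hbB)).1
    have h1 : j ≤ b := h.2 b hbD
    have h2 : b ≤ (n : ℤ) := hb.hBub b hbB
    omega

lemma swapFun_erase_eq_self_hi (h : IsLeast' j D) :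
    swapFun n B B' (D.erase j) = D.erase j := by
  unfold swapFun
  rw [if_neg, if_neg]
  · intro hEq
    obtain ⟨b, hbB'⟩ := hb.hB'
    have hbD : b ∈ D.erase j := (mem_hiP.1 (hEq ▸ hbB')).1
    have h1 : j ≤ b := h.2 b (Finset.mem_of_mem_erase hbD)
    have h2 : b ≤ (n : ℤ) := hb.hB'ub b hbB'
    have h3 : b ≠ j := (Finset.mem_erase.1 hbD).1
    omega
  · intro hEq
    obtain ⟨b, hbB⟩ := hb.hB
    have hbD : b ∈ D.erase j := (mem_hiP.1 (hEq ▸ hbB)).1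
    have h1 : j ≤ b := h.2 b (Finset.mem_of_mem_erase hbD)
    have h2 : b ≤ (n : ℤ) := hb.hBub b hbB
    have h3 : b ≠ j := (Finset.mem_erase.1 hbD).1
    omega

lemma not_isLeast'_swapFun_hi (h : ¬ IsLeast' j D) :
    ¬ IsLeast' j (swapFun n B B' D) := by
  unfold swapFun
  split_ifs with h1 h2
  · rintro ⟨hmem, -⟩
    rcases Finset.mem_union.1 hmem with h' | h'
    · exact absurd (mem_lowP.1 h').2 (by omega)
    · exact absurd (hb.hB'ub j h') (by omega)
  · rintro ⟨hmem, -⟩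
    rcases Finset.mem_union.1 hmem with h' | h'
    · exact absurd (mem_lowP.1 h').2 (by omega)
    · exact absurd (hb.hBub j h') (by omega)
  · exact h

lemma swapFun_eq_self_of_ltAll_hi (h : LtAll j D) :
    swapFun n B B' D = D := by
  unfold swapFun
  rw [if_neg, if_neg]
  · intro hEq
    obtain ⟨b, hbB'⟩ := hb.hB'
    have hbD : b ∈ D := (mem_hiP.1 (hEq ▸ hbB')).1
    have h1 : j < b := h b hbD
    have h2 : b ≤ (n : ℤ) := hb.hB'ub b hbB'
    omega
  · intro hEq
    obtain ⟨b, hbB⟩ := hb.hB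
    have hbD : b ∈ D := (mem_hiP.1 (hEq ▸ hbB)).1
    have h1 : j < b := h b hbD
    have h2 : b ≤ (n : ℤ) := hb.hBub b hbB
    omega

lemma swapFun_insert_eq_self_hi :
    swapFun n B B' (insert j D) = insert j D := by
  unfold swapFun
  rw [if_neg, if_neg]
  · intro hEq
    have hj' : j ∈ B' := hEq ▸ mem_hiP.2 ⟨Finset.mem_insert_self j D, by omega⟩
    exact absurd (hb.hB'ub j hj') (by omega)
  · intro hEq
    have hj' : j ∈ B := hEq ▸ mem_hiP.2 ⟨Finset.mem_insert_self j D, by omega⟩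
    exact absurd (hb.hBub j hj') (by omega)

lemma not_ltAll_swapFun_hi (h : ¬ LtAll j D) :
    ¬ LtAll j (swapFun n B B' D) := by
  unfold swapFun
  split_ifs with h1 h2
  · intro hall
    obtain ⟨b, hbB'⟩ := hb.hB'
    have := hall b (Finset.mem_union_right _ hbB')
    have h2' : b ≤ (n : ℤ) := hb.hB'ub b hbB'
    omega
  · intro hall
    obtain ⟨b, hbB⟩ := hb.hB
    have := hall b (Finset.mem_union_right _ hbB)
    have h2' : b ≤ (n : ℤ) := hb.hBub b hbB
    omega
  · exact h

end Hi


variable {n : ℕ} {B B' A : Finset ℤ}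

lemma hiP_eq_self (h : ∀ x ∈ A, -(n : ℤ) ≤ x) : hiP n A = A :=
  Finset.filter_true_of_mem fun x hx => not_lt.2 (h x hx)

lemma lowP_eq_empty (h : ∀ x ∈ A, -(n : ℤ) ≤ x) : lowP n A = ∅ :=
  Finset.filter_false_of_mem fun x hx => not_lt.2 (h x hx)

lemma swapFun_fix (h1 : hiP n A ≠ B) (h2 : hiP n A ≠ B') :
    swapFun n B B' A = A := by
  unfold swapFun; rw [if_neg h1, if_neg h2]

lemma swapFun_left (hb : Blocks n B B') : swapFun n B B' B = B' := by
  unfold swapFun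
  rw [if_pos (hiP_eq_self hb.hBlb), lowP_eq_empty hb.hBlb, Finset.empty_union]

lemma swapFun_right (hb : Blocks n B B') : swapFun n B B' B' = B := by
  unfold swapFun
  rw [hiP_eq_self hb.hB'lb, if_neg (Ne.symm hb.hne), if_pos rfl,
    lowP_eq_empty hb.hB'lb, Finset.empty_union]

lemma swapFun_empty (hb : Blocks n B B') : swapFun n B B' ∅ = ∅ := by
  apply swapFun_fix
  · rw [show hiP n ∅ = ∅ from rfl]
    exact fun h => hb.hB.ne_empty h.symm
  · rw [show hiP n ∅ = ∅ from rfl]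
    exact fun h => hb.hB'.ne_empty h.symm

lemma blocks_of {A' : Finset ℤ} (hA' : A'.Nonempty) {n₀ : ℕ}
    (hbound : ∀ x ∈ A', |x| ≤ (n₀ : ℤ)) {k : ℤ} (hk : (n₀ : ℤ) < k) :
    Blocks k.toNat A' {k} := by
  have hkn : ((k.toNat : ℕ) : ℤ) = k := Int.toNat_of_nonneg (by omega)
  refine ⟨hA', Finset.singleton_nonempty k, ?_, ?_, ?_, ?_, ?_⟩
  · intro x hx; have h := abs_le.1 (hbound x hx); rw [hkn]; omega
  · intro x hx; have h := abs_le.1 (hbound x hx); rw [hkn]; omega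
  · intro x hx; rw [Finset.mem_singleton] at hx; subst hx; rw [hkn]; omega
  · intro x hx; rw [Finset.mem_singleton] at hx; subst hx; rw [hkn]
  · intro h
    have hk' : k ∈ A' := h ▸ Finset.mem_singleton_self k
    have h2 := abs_le.1 (hbound k hk')
    omega

end SwapAux

namespace HilbAux


variable {e : Finset ℤ → H}

lemma ext_e (hspan : (Submodule.span ℂ (Set.range e)).topologicalClosure = ⊤)
    {S T : H →L[ℂ] H} (h : ∀ A, S (e A) = T (e A)) : S = T := by
  refine ContinuousLinearMap.ext_on
    (Submodule.dense_iff_topologicalClosure_eq_top.2 hspan) ?_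
  rintro x ⟨A, rfl⟩
  exact h A

lemma eq_zero_of_inner_e (hspan : (Submodule.span ℂ (Set.range e)).topologicalClosure = ⊤)
    {x : H} (h : ∀ A, ⟪e A, x⟫_ℂ = 0) : x = 0 := by
  have h1 : Submodule.span ℂ (Set.range e) ⟂ Submodule.span ℂ {x} := by
    refine Submodule.isOrtho_span.2 ?_
    rintro u ⟨A, rfl⟩ v hv
    rcases hv with rfl
    exact h A
  have h2 : x ∈ (Submodule.span ℂ (Set.range e))ᗮ :=
    h1.symm (Submodule.mem_span_singleton_self x)
  rw [Submodule.topologicalClosure_eq_top_iff.1 hspan] at h2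
  exact h2

lemma span_comp (hspan : (Submodule.span ℂ (Set.range e)).topologicalClosure = ⊤)
    (σ : Finset ℤ → Finset ℤ) (hσ : Function.Surjective σ) :
    ⊤ ≤ (Submodule.span ℂ (Set.range (e ∘ σ))).topologicalClosure := by
  have : Set.range (e ∘ σ) = Set.range e := by
    rw [Set.range_comp, Set.range_eq_univ.2 hσ, Set.image_univ]
  rw [this]; exact hspan.ge

/-- The unitary permuting the basis according to an involution `σ`. -/
def permOp (horth : Orthonormal ℂ e)
    (hspan : (Submodule.span ℂ (Set.range e)).topologicalClosure = ⊤)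
    (σ : Finset ℤ → Finset ℤ) (hσ : Function.Involutive σ) : H →L[ℂ] H :=
  ((HilbertBasis.mk horth hspan.ge).repr.trans
    (HilbertBasis.mk (horth.comp σ hσ.injective)
      (span_comp hspan σ hσ.surjective)).repr.symm).toLinearIsometry.toContinuousLinearMap

lemma permOp_apply (horth : Orthonormal ℂ e)
    (hspan : (Submodule.span ℂ (Set.range e)).topologicalClosure = ⊤)
    (σ : Finset ℤ → Finset ℤ) (hσ : Function.Involutive σ) (A : Finset ℤ) :
    permOp horth hspan σ hσ (e A) = e (σ A) := by
  unfold permOp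
  have h1 : (HilbertBasis.mk horth hspan.ge).repr (e A) = lp.single 2 A 1 := by
    conv_lhs => rw [show e A = (HilbertBasis.mk horth hspan.ge) A from
      (congrFun (HilbertBasis.coe_mk horth hspan.ge) A).symm]
    exact HilbertBasis.repr_self _ A
  simp only [LinearIsometry.coe_toContinuousLinearMap,
    LinearIsometryEquiv.coe_toLinearIsometry, LinearIsometryEquiv.trans_apply, h1]
  have h3 : (HilbertBasis.mk (horth.comp σ hσ.injective)
      (span_comp hspan σ hσ.surjective)).repr (e (σ A)) = lp.single 2 A 1 := by
    conv_lhs => rw [show e (σ A) = (HilbertBasis.mk (horth.comp σ hσ.injective)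
        (span_comp hspan σ hσ.surjective)) A from
      (congrFun (HilbertBasis.coe_mk (horth.comp σ hσ.injective)
        (span_comp hspan σ hσ.surjective)) A).symm]
    exact HilbertBasis.repr_self _ A
  rw [← h3, LinearIsometryEquiv.symm_apply_apply]


lemma permOp_permOp (horth : Orthonormal ℂ e)
    (hspan : (Submodule.span ℂ (Set.range e)).topologicalClosure = ⊤)
    (σ : Finset ℤ → Finset ℤ) (hσ : Function.Involutive σ) (x : H) :
    permOp horth hspan σ hσ (permOp horth hspan σ hσ x) = x := by
  have : permOp horth hspan σ hσ * permOp horth hspan σ hσ = 1 := by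
    refine ext_e hspan fun A => ?_
    rw [ContinuousLinearMap.mul_apply, permOp_apply, permOp_apply, hσ A,
      ContinuousLinearMap.one_apply]
  calc permOp horth hspan σ hσ (permOp horth hspan σ hσ x)
      = (permOp horth hspan σ hσ * permOp horth hspan σ hσ) x := rfl
    _ = x := by rw [this, ContinuousLinearMap.one_apply]

lemma permOp_inner (horth : Orthonormal ℂ e)
    (hspan : (Submodule.span ℂ (Set.range e)).topologicalClosure = ⊤)
    (σ : Finset ℤ → Finset ℤ) (hσ : Function.Involutive σ) (x y : H) :
    ⟪permOp horth hspan σ hσ x, y⟫_ℂ = ⟪x, permOp horth hspan σ hσ y⟫_ℂ := by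
  conv_lhs => rw [show y = permOp horth hspan σ hσ (permOp horth hspan σ hσ y) from
    (permOp_permOp horth hspan σ hσ y).symm]
  exact (((HilbertBasis.mk horth hspan.ge).repr.trans
    (HilbertBasis.mk (horth.comp σ hσ.injective)
      (span_comp hspan σ hσ.surjective)).repr.symm)).inner_map_map x _


end HilbAux

section Main

open SwapAux HilbAux

variable {e : Finset ℤ → H} {a : ℤ → H →L[ℂ] H}

lemma swapOp_mem_centralizer
    (horth : Orthonormal ℂ e)
    (hspan : (Submodule.span ℂ (Set.range e)).topologicalClosure = ⊤)
    (hann : ∀ i A, (IsLeast' i A → a i (e A) = e (A.erase i)) ∧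
      (¬ IsLeast' i A → a i (e A) = 0))
    (hcr : ∀ i A, (LtAll i A → star (a i) (e A) = e (insert i A)) ∧
      (¬ LtAll i A → star (a i) (e A) = 0))
    {n : ℕ} {B B' : Finset ℤ} (hb : Blocks n B B') :
    permOp horth hspan (swapFun n B B') (swapFun_invol hb) ∈
      Set.centralizer ({T : H →L[ℂ] H | ∃ j : ℤ, (n : ℤ) < |j| ∧ T = a j} ∪
        star '' {T : H →L[ℂ] H | ∃ j : ℤ, (n : ℤ) < |j| ∧ T = a j}) := by
  rw [Set.mem_centralizer_iff]
  rintro m (⟨j, hj, rfl⟩ | ⟨m', ⟨j, hj, rfl⟩, rfl⟩)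
  · refine ext_e hspan fun D => ?_
    rw [ContinuousLinearMap.mul_apply, ContinuousLinearMap.mul_apply, permOp_apply]
    rcases lt_abs.1 hj with hjpos | hjneg
    · by_cases hL : IsLeast' j D
      · rw [swapFun_eq_self_of_isLeast'_hi hb hjpos hL, (hann j D).1 hL, permOp_apply,
          swapFun_erase_eq_self_hi hb hjpos hL]
      · rw [(hann j D).2 hL, map_zero,
          (hann j _).2 (not_isLeast'_swapFun_hi hb hjpos hL)]
    · have hj' : j < -(n : ℤ) := by omega
      by_cases hL : IsLeast' j D
      · rw [(hann j D).1 hL, permOp_apply,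
          (hann j _).1 ((isLeast'_swapFun_lo hb hj').2 hL), swapFun_erase_lo hb hj']
      · rw [(hann j D).2 hL, map_zero,
          (hann j _).2 (fun h => hL ((isLeast'_swapFun_lo hb hj').1 h))]
  · refine ext_e hspan fun D => ?_
    rw [ContinuousLinearMap.mul_apply, ContinuousLinearMap.mul_apply, permOp_apply]
    rcases lt_abs.1 hj with hjpos | hjneg
    · by_cases hL : LtAll j D
      · rw [swapFun_eq_self_of_ltAll_hi hb hjpos hL, (hcr j D).1 hL, permOp_apply,
          swapFun_insert_eq_self_hi hb hjpos]
      · rw [(hcr j D).2 hL, map_zero,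
          (hcr j _).2 (not_ltAll_swapFun_hi hb hjpos hL)]
    · have hj' : j < -(n : ℤ) := by omega
      by_cases hL : LtAll j D
      · rw [(hcr j D).1 hL, permOp_apply,
          (hcr j _).1 ((ltAll_swapFun_lo hb hj').2 hL), swapFun_insert_lo hb hj']
      · rw [(hcr j D).2 hL, map_zero,
          (hcr j _).2 (fun h => hL ((ltAll_swapFun_lo hb hj').1 h))]

lemma const_inner_zero (horth : Orthonormal ℂ e) (x : H) (v : ℂ) (m0 : ℤ)
    (h : ∀ k : ℤ, m0 ≤ k → ⟪e {k}, x⟫_ℂ = v) : v = 0 := by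
  by_contra hv
  have hv0 : (0 : ℝ) < ‖v‖ := norm_pos_iff.2 hv
  have hvpos : (0 : ℝ) < ‖v‖ ^ 2 := by positivity
  obtain ⟨N, hN⟩ := exists_nat_gt (‖x‖ ^ 2 / ‖v‖ ^ 2)
  have hinj : Function.Injective (fun k : ℕ => ({m0 + (k : ℤ)} : Finset ℤ)) := by
    intro p q hpq
    simp only [Finset.singleton_inj] at hpq
    omega
  have horth' : Orthonormal ℂ (fun k : ℕ => e {m0 + (k : ℤ)}) :=
    horth.comp _ hinj
  have hb := horth'.sum_inner_products_le (s := Finset.range N) x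
  have heq : ∀ k ∈ Finset.range N, ‖⟪e {m0 + (k : ℤ)}, x⟫_ℂ‖ ^ 2 = ‖v‖ ^ 2 := by
    intro k _
    rw [h (m0 + (k : ℤ)) (by omega)]
  rw [Finset.sum_congr rfl heq, Finset.sum_const, Finset.card_range,
    nsmul_eq_mul] at hb
  have : ‖x‖ ^ 2 < (N : ℝ) * ‖v‖ ^ 2 := (div_lt_iff₀ hvpos).1 hN
  linarith

lemma bound_exists (A : Finset ℤ) : ∃ n₀ : ℕ, ∀ x ∈ A, |x| ≤ (n₀ : ℤ) := by
  refine ⟨A.sup Int.natAbs, fun x hx => ?_⟩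
  have h := Finset.le_sup (f := Int.natAbs) hx
  rw [Int.abs_eq_natAbs]
  exact_mod_cast h

lemma vac_eigen
    (horth : Orthonormal ℂ e)
    (hspan : (Submodule.span ℂ (Set.range e)).topologicalClosure = ⊤)
    (hann : ∀ i A, (IsLeast' i A → a i (e A) = e (A.erase i)) ∧
      (¬ IsLeast' i A → a i (e A) = 0))
    (hcr : ∀ i A, (LtAll i A → star (a i) (e A) = e (insert i A)) ∧
      (¬ LtAll i A → star (a i) (e A) = 0))
    {n : ℕ} {m : H →L[ℂ] H}
    (hm : m ∈ Set.centralizer ({T : H →L[ℂ] H | ∃ j : ℤ, (n : ℤ) < |j| ∧ T = a j} ∪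
        star '' {T : H →L[ℂ] H | ∃ j : ℤ, (n : ℤ) < |j| ∧ T = a j})) :
    m (e ∅) = ⟪e ∅, m (e ∅)⟫_ℂ • e ∅ := by
  rw [Set.mem_centralizer_iff] at hm
  have hx : ∀ A : Finset ℤ, A ≠ ∅ → ⟪e A, m (e ∅)⟫_ℂ = 0 := by
    intro A hA
    have hAne : A.Nonempty := Finset.nonempty_iff_ne_empty.2 hA
    set j : ℤ := max ((n : ℤ) + 1) (A.max' hAne) with hjdef
    have hjn : (n : ℤ) < j := lt_of_lt_of_le (by omega) (le_max_left _ _)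
    have hj : (n : ℤ) < |j| := by
      rw [lt_abs]; exact Or.inl hjn
    have hc1 : a j * m = m * a j := hm (a j) (Or.inl ⟨j, hj, rfl⟩)
    have hc2 : star (a j) * m = m * star (a j) := hm (star (a j)) (Or.inr ⟨a j, ⟨j, hj, rfl⟩, rfl⟩)
    have hc1' : ∀ z, a j (m z) = m (a j z) := fun z => by
      rw [← ContinuousLinearMap.mul_apply, hc1, ContinuousLinearMap.mul_apply]
    have hc2' : ∀ z, star (a j) (m z) = m (star (a j) z) := fun z => by
      rw [← ContinuousLinearMap.mul_apply, hc2, ContinuousLinearMap.mul_apply]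
    have h1 : star (a j) (e ∅) = e {j} := by
      have := (hcr j ∅).1 (fun x hx => absurd hx (Finset.notMem_empty x))
      simpa using this
    have h2 : a j (e {j}) = e ∅ := by
      have := (hann j {j}).1 ⟨Finset.mem_singleton_self j,
        fun x hx => le_of_eq ((Finset.mem_singleton.1 hx).symm)⟩
      rwa [Finset.erase_singleton] at this
    have h3 : star (a j) (e A) = 0 := by
      refine (hcr j A).2 ?_
      intro hall
      have := hall (A.max' hAne) (A.max'_mem hAne)
      have : A.max' hAne ≤ j := le_max_right _ _
      omega
    calc ⟪e A, m (e ∅)⟫_ℂ = ⟪e A, m (a j (star (a j) (e ∅)))⟫_ℂ := by rw [h1, h2]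
      _ = ⟪e A, a j (star (a j) (m (e ∅)))⟫_ℂ := by rw [hc2', hc1']
      _ = ⟪ContinuousLinearMap.adjoint (a j) (e A), star (a j) (m (e ∅))⟫_ℂ :=
        (ContinuousLinearMap.adjoint_inner_left (a j) _ _).symm
      _ = 0 := by
        rw [← ContinuousLinearMap.star_eq_adjoint, h3, inner_zero_left]
  have hz : m (e ∅) - ⟪e ∅, m (e ∅)⟫_ℂ • e ∅ = 0 := by
    refine eq_zero_of_inner_e hspan fun A => ?_
    rw [inner_sub_right, inner_smul_right]
    by_cases hA : A = ∅
    · subst hA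
      have h1 : ⟪e (∅ : Finset ℤ), e (∅ : Finset ℤ)⟫_ℂ = 1 := by
        have := orthonormal_iff_ite.1 horth ∅ ∅
        simpa using this
      rw [h1, mul_one, sub_self]
    · have h1 : ⟪e A, e (∅ : Finset ℤ)⟫_ℂ = 0 := by
        have := orthonormal_iff_ite.1 horth A ∅
        simpa [hA] using this
      rw [hx A hA, h1, mul_zero, sub_zero]
  have := sub_eq_zero.1 hz
  exact this

lemma star_mem_cent {S : Set (H →L[ℂ] H)} {m : H →L[ℂ] H}
    (hm : m ∈ Set.centralizer (S ∪ star '' S)) :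
    star m ∈ Set.centralizer (S ∪ star '' S) := by
  rw [Set.mem_centralizer_iff] at hm ⊢
  rintro g (hg | ⟨g', hg', rfl⟩)
  · have := congrArg star (hm (star g) (Or.inr ⟨g, hg, rfl⟩))
    simpa [star_mul, star_star] using this.symm
  · have := congrArg star (hm g' (Or.inl hg'))
    simpa [star_mul, star_star] using this.symm

end Main


lemma vNgen_comm {S : Set (H →L[ℂ] H)} {T m : H →L[ℂ] H} (hT : T ∈ vNgen S)
    (hm : m ∈ Set.centralizer (S ∪ star '' S)) : m * T = T * m :=
  Set.mem_centralizer_iff.1 hT m hm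

lemma vNgen_of {S : Set (H →L[ℂ] H)} {T : H →L[ℂ] H}
    (h : ∀ m ∈ Set.centralizer (S ∪ star '' S), m * T = T * m) : T ∈ vNgen S :=
  Set.mem_centralizer_iff.2 h

theorem stmt4 (e : Finset ℤ → H) (a : ℤ → H →L[ℂ] H) (hma : MonotoneAnnOps e a) :
    (⋂ n : ℕ, vNgen {T : H →L[ℂ] H | ∃ j : ℤ, (n : ℤ) < |j| ∧ T = a j}) =
      {T : H →L[ℂ] H | ∃ c d : ℂ, T = c • projVac (e ∅) + d • (1 - projVac (e ∅))} := by
  obtain ⟨horth, hspan, hann, hcr⟩ := hma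
  have horthit := orthonormal_iff_ite.1 horth
  have hoe : ∀ X : Finset ℤ, ⟪e X, e X⟫_ℂ = 1 := fun X => by simpa using horthit X X
  have hoi : ∀ X Y : Finset ℤ, X ≠ Y → ⟪e X, e Y⟫_ℂ = 0 := fun X Y h => by
    simpa [h] using horthit X Y
  have hP : ∀ x : H, projVac (e ∅) x = ⟪e (∅ : Finset ℤ), x⟫_ℂ • e ∅ := fun x => rfl
  ext T
  simp only [Set.mem_iInter, Set.mem_setOf_eq]
  constructor
  · intro hT
    have hswap : ∀ (n : ℕ) (B B' : Finset ℤ) (hb : SwapAux.Blocks n B B')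
        (A A' : Finset ℤ),
        ⟪e A', T (e A)⟫_ℂ =
          ⟪e (SwapAux.swapFun n B B' A'), T (e (SwapAux.swapFun n B B' A))⟫_ℂ := by
      intro n B B' hb A A'
      have hU := vNgen_comm (hT n) (swapOp_mem_centralizer horth hspan hann hcr hb)
      have hUT : ∀ z : H, HilbAux.permOp horth hspan _ (SwapAux.swapFun_invol hb) (T z)
          = T (HilbAux.permOp horth hspan _ (SwapAux.swapFun_invol hb) z) := fun z => by
        rw [← ContinuousLinearMap.mul_apply, hU, ContinuousLinearMap.mul_apply]
      calc ⟪e A', T (e A)⟫_ℂ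
          = ⟪HilbAux.permOp horth hspan _ (SwapAux.swapFun_invol hb)
              (e (SwapAux.swapFun n B B' A')), T (e A)⟫_ℂ := by
            rw [HilbAux.permOp_apply horth hspan _ (SwapAux.swapFun_invol hb),
              SwapAux.swapFun_invol hb A']
        _ = ⟪e (SwapAux.swapFun n B B' A'),
              HilbAux.permOp horth hspan _ (SwapAux.swapFun_invol hb) (T (e A))⟫_ℂ :=
            HilbAux.permOp_inner horth hspan _ _ _ _
        _ = ⟪e (SwapAux.swapFun n B B' A'),
              T (HilbAux.permOp horth hspan _ (SwapAux.swapFun_invol hb) (e A))⟫_ℂ := by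
            rw [hUT]
        _ = _ := by
            rw [HilbAux.permOp_apply horth hspan _ (SwapAux.swapFun_invol hb)]
    have offdiag : ∀ A A' : Finset ℤ, A' ≠ ∅ → A ≠ A' → ⟪e A', T (e A)⟫_ℂ = 0 := by
      intro A A' hA' hAA
      obtain ⟨n₀, hn₀⟩ := bound_exists (A ∪ A')
      refine const_inner_zero horth (T (e A)) _ ((n₀ : ℤ) + 1) fun k hk => ?_
      have hk' : (n₀ : ℤ) < k := by omega
      have hb := SwapAux.blocks_of (Finset.nonempty_iff_ne_empty.2 hA')
        (fun x hx => hn₀ x (Finset.mem_union_right _ hx)) hk'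
      have hkn : ((k.toNat : ℕ) : ℤ) = k := Int.toNat_of_nonneg (by omega)
      have hAbd : ∀ x ∈ A, -((k.toNat : ℕ) : ℤ) ≤ x := by
        intro x hx
        have h := abs_le.1 (hn₀ x (Finset.mem_union_left _ hx))
        omega
      have hhiA : SwapAux.hiP k.toNat A = A := SwapAux.hiP_eq_self hAbd
      have hkA : k ∉ A := fun h => by
        have := abs_le.1 (hn₀ k (Finset.mem_union_left _ h)); omega
      have hfix : SwapAux.swapFun k.toNat A' {k} A = A := by
        apply SwapAux.swapFun_fix
        · rw [hhiA]; exact hAA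
        · rw [hhiA]; intro h; exact hkA (h ▸ Finset.mem_singleton_self k)
      have h := hswap k.toNat A' {k} hb A A'
      rw [SwapAux.swapFun_left hb, hfix] at h
      exact h.symm
    have zetarow : ∀ A : Finset ℤ, A ≠ ∅ → ⟪e (∅ : Finset ℤ), T (e A)⟫_ℂ = 0 := by
      intro A hA
      obtain ⟨n₀, hn₀⟩ := bound_exists A
      have hconst : ∀ k : ℤ, (n₀ : ℤ) + 1 ≤ k →
          ⟪e {k}, ContinuousLinearMap.adjoint T (e (∅ : Finset ℤ))⟫_ℂ =
            (starRingEnd ℂ) ⟪e (∅ : Finset ℤ), T (e A)⟫_ℂ := by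
        intro k hk
        have hk' : (n₀ : ℤ) < k := by omega
        have hb := SwapAux.blocks_of (Finset.nonempty_iff_ne_empty.2 hA) hn₀ hk'
        have h := hswap k.toNat A {k} hb {k} ∅
        rw [SwapAux.swapFun_empty hb, SwapAux.swapFun_right hb] at h
        rw [ContinuousLinearMap.adjoint_inner_right,
          ← inner_conj_symm (T (e {k})) (e (∅ : Finset ℤ)), h]
      have h0 := const_inner_zero horth _ _ _ hconst
      have h1 := congrArg (starRingEnd ℂ) h0
      simpa using h1
    have diagk : ∀ A : Finset ℤ, A ≠ ∅ → ∀ n₀ : ℕ, (∀ x ∈ A, |x| ≤ (n₀ : ℤ)) →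
        ∀ k : ℤ, (n₀ : ℤ) < k → ⟪e A, T (e A)⟫_ℂ = ⟪e {k}, T (e {k})⟫_ℂ := by
      intro A hA n₀ hn₀ k hk
      have hb := SwapAux.blocks_of (Finset.nonempty_iff_ne_empty.2 hA) hn₀ hk
      have h := hswap k.toNat A {k} hb A A
      rwa [SwapAux.swapFun_left hb] at h
    have diag : ∀ A : Finset ℤ, A ≠ ∅ →
        ⟪e A, T (e A)⟫_ℂ = ⟪e ({0} : Finset ℤ), T (e {0})⟫_ℂ := by
      intro A hA
      obtain ⟨n₀, hn₀⟩ := bound_exists (A ∪ {0})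
      have h1 := diagk A hA n₀ (fun x hx => hn₀ x (Finset.mem_union_left _ hx))
        ((n₀ : ℤ) + 1) (by omega)
      have h2 := diagk {0} (Finset.singleton_ne_empty 0) n₀
        (fun x hx => hn₀ x (Finset.mem_union_right _ hx)) ((n₀ : ℤ) + 1) (by omega)
      rw [h1, ← h2]
    refine ⟨⟪e (∅ : Finset ℤ), T (e ∅)⟫_ℂ, ⟪e ({0} : Finset ℤ), T (e {0})⟫_ℂ, ?_⟩
    refine HilbAux.ext_e hspan fun A =>
      sub_eq_zero.1 (HilbAux.eq_zero_of_inner_e hspan fun A' => ?_)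
    rw [inner_sub_right]
    simp only [ContinuousLinearMap.add_apply, ContinuousLinearMap.smul_apply,
      ContinuousLinearMap.sub_apply, ContinuousLinearMap.one_apply, hP,
      inner_add_right, inner_smul_right, inner_sub_right]
    by_cases hA : A = ∅
    · subst hA
      by_cases hA' : A' = ∅
      · subst hA'
        rw [hoe]
        ring
      · rw [offdiag ∅ A' hA' (fun h => hA' h.symm), hoi A' ∅ hA']
        ring
    · rw [hoi ∅ A (fun h => hA h.symm)]
      by_cases hA' : A' = ∅
      · subst hA'
        rw [zetarow A hA, hoi ∅ A (fun h => hA h.symm)]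
        ring
      · by_cases hAA : A' = A
        · subst hAA
          rw [hoe, diag A' hA]
          ring
        · rw [offdiag A A' hA' (fun h => hAA h.symm), hoi A' A hAA]
          ring
  · rintro ⟨c, d, rfl⟩
    intro n
    refine vNgen_of fun m hm => ?_
    have h1 := vac_eigen horth hspan hann hcr hm
    have h2 := vac_eigen horth hspan hann hcr (star_mem_cent hm)
    have hPm : m * projVac (e ∅) = projVac (e ∅) * m := by
      refine ContinuousLinearMap.ext fun x => ?_
      rw [ContinuousLinearMap.mul_apply, ContinuousLinearMap.mul_apply, hP, hP, map_smul, h1]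
      have h3 : ⟪e (∅ : Finset ℤ), m x⟫_ℂ =
          ⟪e (∅ : Finset ℤ), m (e ∅)⟫_ℂ * ⟪e (∅ : Finset ℤ), x⟫_ℂ := by
        calc ⟪e (∅ : Finset ℤ), m x⟫_ℂ
            = ⟪ContinuousLinearMap.adjoint m (e ∅), x⟫_ℂ :=
              (ContinuousLinearMap.adjoint_inner_left m x (e ∅)).symm
          _ = ⟪star m (e ∅), x⟫_ℂ := by rw [← ContinuousLinearMap.star_eq_adjoint]
          _ = ⟪⟪e (∅ : Finset ℤ), star m (e ∅)⟫_ℂ • e ∅, x⟫_ℂ := by rw [← h2]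
          _ = (starRingEnd ℂ) ⟪e (∅ : Finset ℤ), star m (e ∅)⟫_ℂ *
                ⟪e (∅ : Finset ℤ), x⟫_ℂ := inner_smul_left _ _ _
          _ = ⟪star m (e ∅), e (∅ : Finset ℤ)⟫_ℂ * ⟪e (∅ : Finset ℤ), x⟫_ℂ := by
              rw [inner_conj_symm]
          _ = ⟪e (∅ : Finset ℤ), m (e ∅)⟫_ℂ * ⟪e (∅ : Finset ℤ), x⟫_ℂ := by
              rw [ContinuousLinearMap.star_eq_adjoint,
                ContinuousLinearMap.adjoint_inner_left]
      rw [h3, smul_smul, mul_comm]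
    simp only [mul_add, add_mul, mul_smul_comm, smul_mul_assoc, mul_sub, sub_mul,
      mul_one, one_mul, hPm]

end
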